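/- Let X = (X_1,…,X_m) be independent random variables and g a real-valued function of X. If X^{(i)} denotes X with X_i replaced by an independent copy X'_i, then Var(g(X)) ≤ (1/2)∑_{i=1}^m E[(g(X) − g(X^{(i)}))²] (the Efron–Stein inequality). -/

import Mathlib

set_option linter.unusedSectionVars false
set_option maxHeartbeats 1000000
open MeasureTheory ProbabilityTheory Function

section Aux
variable {α : Type*} [MeasurableSpace α] {μ : Measure α}

lemma integrable_mul_of_memL2 {f g : α → ℝ} (hf : MemLp f 2 μ) (hg : MemLp g 2 μ) :
    Integrable (fun x => f x * g x) μ := by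
  refine Integrable.mono' ((hf.integrable_sq.add hg.integrable_sq).div_const 2)
    (hf.aestronglyMeasurable.mul hg.aestronglyMeasurable) (.of_forall fun x => ?_)
  have h := sq_nonneg (|f x| - |g x|)
  rw [Real.norm_eq_abs, abs_mul]
  simp only [Pi.add_apply]
  nlinarith [sq_abs (f x), sq_abs (g x), sq_nonneg (|f x| - |g x|)]

lemma sq_integral_le [IsProbabilityMeasure μ] {f : α → ℝ} (hf : MemLp f 2 μ) :
    (∫ x, f x ∂μ)^2 ≤ ∫ x, (f x)^2 ∂μ := by
  have h := variance_nonneg f μ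
  rw [variance_eq_sub hf] at h
  simp only [Pi.pow_apply] at h
  linarith

lemma measurePreserving_fst' {β : Type*} [MeasurableSpace β] {ν : Measure β}
    [SFinite μ] [IsProbabilityMeasure ν] :
    MeasurePreserving (Prod.fst : α × β → α) (μ.prod ν) μ :=
  ⟨measurable_fst, by rw [Measure.map_fst_prod]; simp⟩

end Aux

section Aux2
variable {α β : Type*} [MeasurableSpace α] [MeasurableSpace β]
  {μ : Measure α} {κ : Measure β} [IsProbabilityMeasure μ] [IsProbabilityMeasure κ]

lemma sq_integral_le' {f : α → ℝ} (hf : MemLp f 2 μ) :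
    (∫ x, f x ∂μ)^2 ≤ ∫ x, (f x)^2 ∂μ := by
  have h := variance_nonneg f μ
  rw [variance_eq_sub hf] at h
  simp only [Pi.pow_apply] at h
  linarith

lemma MeasureTheory.MeasurePreserving.integral_comp'' {f : α → β} (hf : MeasurePreserving f μ κ)
    {h : β → ℝ} (hh : AEStronglyMeasurable h κ) :
    ∫ x, h (f x) ∂μ = ∫ y, h y ∂κ := by
  rw [← hf.map_eq] at hh ⊢
  exact (integral_map hf.measurable.aemeasurable hh).symm

lemma aux_L2 {F : α × β → ℝ} (hFm : StronglyMeasurable F) (hF : MemLp F 2 (μ.prod κ)) :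
    MemLp (fun x => ∫ y, F (x, y) ∂κ) 2 μ ∧
      ∫ x, (∫ y, F (x, y) ∂κ)^2 ∂μ ≤ ∫ z, (F z)^2 ∂(μ.prod κ) := by
  have hsm : StronglyMeasurable (fun x => ∫ y, F (x, y) ∂κ) := hFm.integral_prod_right'
  have hF2 : Integrable (fun z => (F z)^2) (μ.prod κ) := hF.integrable_sq
  have hae : ∀ᵐ x ∂μ, (∫ y, F (x, y) ∂κ)^2 ≤ ∫ y, (F (x, y))^2 ∂κ := by
    filter_upwards [hF2.prod_right_ae] with x hx
    have hsl : MemLp (fun y => F (x, y)) 2 κ := by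
      exact (memLp_two_iff_integrable_sq ((hFm.comp_measurable
        measurable_prodMk_left).aestronglyMeasurable)).2 hx
    exact sq_integral_le' hsl
  have hI : Integrable (fun x => ∫ y, (F (x, y))^2 ∂κ) μ := hF2.integral_prod_left
  have hint : Integrable (fun x => (∫ y, F (x, y) ∂κ)^2) μ := by
    refine Integrable.mono' hI (hsm.pow 2).aestronglyMeasurable ?_
    filter_upwards [hae] with x hx
    rw [Real.norm_eq_abs, abs_of_nonneg (sq_nonneg _)]
    exact hx
  refine ⟨(memLp_two_iff_integrable_sq hsm.aestronglyMeasurable).2 hint, ?_⟩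
  calc ∫ x, (∫ y, F (x, y) ∂κ)^2 ∂μ ≤ ∫ x, ∫ y, (F (x, y))^2 ∂κ ∂μ :=
        integral_mono_ae hint hI hae
    _ = ∫ z, (F z)^2 ∂(μ.prod κ) := (integral_prod _ hF2).symm

end Aux2

section ES
variable {𝒳 : Type*} [MeasurableSpace 𝒳] {m : ℕ}

def sel (p : Fin m → Prop) [DecidablePred p] (z : (Fin m → 𝒳) × (Fin m → 𝒳)) : Fin m → 𝒳 :=
  fun j => if p j then z.1 j else z.2 j

lemma sel_ne (i : Fin m) (z : (Fin m → 𝒳) × (Fin m → 𝒳)) :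
    sel (fun j => j ≠ i) z = update z.1 i (z.2 i) := by
  funext j
  rcases eq_or_ne j i with h | h
  · subst h; simp [sel]
  · simp [sel, h]

lemma sel_top (x y : Fin m → 𝒳) : sel (fun j => (j : ℕ) < m) (x, y) = x := by
  funext j; simp [sel, j.isLt]

lemma sel_bot (x y : Fin m → 𝒳) : sel (fun j => (j : ℕ) < 0) (x, y) = y := by
  funext j; simp [sel]

lemma sel_update {n : ℕ} {i : Fin m} (hn : n ≤ (i : ℕ)) (x : Fin m → 𝒳) (t : 𝒳)
    (y : Fin m → 𝒳) :
    sel (fun j => (j : ℕ) < n) (update x i t, y) = sel (fun j => (j : ℕ) < n) (x, y) := by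
  funext j
  by_cases h : (j : ℕ) < n
  · have : j ≠ i := by intro e; subst e; omega
    simp [sel, h, this]
  · simp [sel, h]

lemma sel_succ_pair (i : Fin m) (z : (Fin m → 𝒳) × (Fin m → 𝒳)) :
    sel (fun j => (j : ℕ) < (i : ℕ) + 1)
      (sel (fun j => j ≠ i) z, sel (fun j => ¬ j ≠ i) z) =
    sel (fun j => (j : ℕ) < (i : ℕ)) z := by
  funext j
  rcases eq_or_ne j i with h | h
  · subst h; simp [sel]
  · have hv : (j : ℕ) ≠ (i : ℕ) := fun e => h (Fin.ext e)
    by_cases hlt : (j : ℕ) < (i : ℕ)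
    · have : (j : ℕ) < (i : ℕ) + 1 := by omega
      simp [sel, h, hlt, this]
    · have : ¬ (j : ℕ) < (i : ℕ) + 1 := by omega
      simp [sel, h, hlt, this]

lemma update_sel (i : Fin m) (x y y' : Fin m → 𝒳) :
    update (sel (fun j => (j : ℕ) < (i : ℕ) + 1) (x, y)) i (y' i) =
      sel (fun j => (j : ℕ) < (i : ℕ)) (x, sel (fun j => j ≠ i) (y, y')) := by
  funext j
  rcases eq_or_ne j i with h | h
  · subst h; simp [sel]
  · have hv : (j : ℕ) ≠ (i : ℕ) := fun e => h (Fin.ext e)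
    by_cases hlt : (j : ℕ) < (i : ℕ)
    · have : (j : ℕ) < (i : ℕ) + 1 := by omega
      simp [sel, h, hlt, this]
    · have : ¬ (j : ℕ) < (i : ℕ) + 1 := by omega
      simp [sel, h, hlt, this]

lemma sel_ne_update (i : Fin m) (x : Fin m → 𝒳) (t : 𝒳) (y : Fin m → 𝒳) :
    sel (fun j => j ≠ i) (update x i t, y) = sel (fun j => j ≠ i) (x, y) := by
  funext j
  rcases eq_or_ne j i with h | h <;> simp [sel, h]

lemma measurable_sel (p : Fin m → Prop) [DecidablePred p] :
    Measurable (sel (𝒳 := 𝒳) p) := by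
  apply measurable_pi_lambda
  intro j
  by_cases h : p j <;> simp only [sel, h, if_true, if_false]
  · exact (measurable_pi_apply j).comp measurable_fst
  · exact (measurable_pi_apply j).comp measurable_snd

variable (ν : Fin m → Measure 𝒳) [∀ i, IsProbabilityMeasure (ν i)]

lemma measurePreserving_selPair (p : Fin m → Prop) [DecidablePred p] :
    MeasurePreserving (fun z => (sel p z, sel (fun j => ¬ p j) z))
      ((Measure.pi ν).prod (Measure.pi ν)) ((Measure.pi ν).prod (Measure.pi ν)) := by
  classical
  set e := MeasurableEquiv.piEquivPiSubtypeProd (fun _ : Fin m => 𝒳) p with he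
  set ρA := Measure.pi (fun i : Subtype p => ν i) with hρA
  set ρB := Measure.pi (fun i : {j // ¬ p j} => ν i) with hρB
  have hA : MeasurePreserving e (Measure.pi ν) (ρA.prod ρB) :=
    measurePreserving_piEquivPiSubtypeProd ν p
  -- the middle rearrangement on (A × B) × (A × B)
  have h1 := (measurePreserving_prodAssoc ρA ρB (ρA.prod ρB))
  have h2 := (MeasurePreserving.id ρA).prod (Measure.measurePreserving_swap (μ := ρB) (ν := ρA.prod ρB))
  have h3 := (MeasurePreserving.id ρA).prod (measurePreserving_prodAssoc ρA ρB ρB)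
  have h4 := (MeasurePreserving.id ρA).prod
    ((MeasurePreserving.id ρA).prod (Measure.measurePreserving_swap (μ := ρB) (ν := ρB)))
  have h5 := (MeasurePreserving.id ρA).prod
    ((measurePreserving_prodAssoc ρA ρB ρB).symm MeasurableEquiv.prodAssoc)
  have h6 := (MeasurePreserving.id ρA).prod
    (Measure.measurePreserving_swap (μ := ρA.prod ρB) (ν := ρB))
  have h7 := (measurePreserving_prodAssoc ρA ρB (ρA.prod ρB)).symm MeasurableEquiv.prodAssoc
  have hmid := (h7.comp (h6.comp (h5.comp (h4.comp (h3.comp (h2.comp h1))))))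
  have hfull := ((hA.symm e).prod (hA.symm e)).comp (hmid.comp (hA.prod hA))
  convert hfull using 1
  funext z
  ext j
  · show sel p z j = _
    simp [sel, MeasurableEquiv.prodAssoc, MeasurableEquiv.piEquivPiSubtypeProd,
      Equiv.piEquivPiSubtypeProd, Prod.map, e]
  · show sel (fun j => ¬ p j) z j = _
    simp [sel, MeasurableEquiv.prodAssoc, MeasurableEquiv.piEquivPiSubtypeProd,
      Equiv.piEquivPiSubtypeProd, Prod.map, e]



lemma measurePreserving_sel (p : Fin m → Prop) [DecidablePred p] :
    MeasurePreserving (fun z => sel p z) ((Measure.pi ν).prod (Measure.pi ν)) (Measure.pi ν) :=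
  measurePreserving_fst'.comp (measurePreserving_selPair ν p)

variable (g : (Fin m → 𝒳) → ℝ)

/-- martingale-type interpolation: integrate out the coordinates `≥ k`. -/
noncomputable def ESG (k : ℕ) (x : Fin m → 𝒳) : ℝ :=
  ∫ y, g (sel (fun j => (j : ℕ) < k) (x, y)) ∂(Measure.pi ν)

/-- integrate out coordinate `i`. -/
noncomputable def ESP (i : Fin m) (x : Fin m → 𝒳) : ℝ :=
  ∫ y, g (sel (fun j => j ≠ i) (x, y)) ∂(Measure.pi ν)

variable {g}
variable (hg : Measurable g) (hgL2 : MemLp g 2 (Measure.pi ν))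

section L2facts
include hg hgL2

lemma memL2_sel (p : Fin m → Prop) [DecidablePred p] :
    MemLp (fun z => g (sel p z)) 2 ((Measure.pi ν).prod (Measure.pi ν)) :=
  hgL2.comp_measurePreserving (measurePreserving_sel ν p)

lemma memL2_ESG (k : ℕ) : MemLp (ESG ν g k) 2 (Measure.pi ν) :=
  (aux_L2 ((hg.comp (measurable_sel _)).stronglyMeasurable) (memL2_sel ν hg hgL2 _)).1

lemma memL2_ESP (i : Fin m) : MemLp (ESP ν g i) 2 (Measure.pi ν) :=
  (aux_L2 ((hg.comp (measurable_sel _)).stronglyMeasurable) (memL2_sel ν hg hgL2 _)).1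

lemma sm_ESG (k : ℕ) : StronglyMeasurable (ESG ν g k) :=
  StronglyMeasurable.integral_prod_right' (hg.comp (measurable_sel _)).stronglyMeasurable

lemma sm_ESP (i : Fin m) : StronglyMeasurable (ESP ν g i) :=
  StronglyMeasurable.integral_prod_right' (hg.comp (measurable_sel _)).stronglyMeasurable

end L2facts

lemma ESG_top (x : Fin m → 𝒳) : ESG ν g m x = g x := by
  have : ∀ y : Fin m → 𝒳, g (sel (fun j => (j : ℕ) < m) (x, y)) = g x := fun y => by
    rw [sel_top]
  simp only [ESG, this, integral_const, measure_univ, probReal_univ, ENNReal.toReal_one, one_smul, smul_eq_mul,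
    one_mul]

lemma ESG_zero (x : Fin m → 𝒳) : ESG ν g 0 x = ∫ y, g y ∂(Measure.pi ν) := by
  have : ∀ y : Fin m → 𝒳, g (sel (fun j => (j : ℕ) < 0) (x, y)) = g y := fun y => by
    rw [sel_bot]
  simp only [ESG, this]

lemma ESG_update {n : ℕ} {i : Fin m} (hn : n ≤ (i : ℕ)) (x : Fin m → 𝒳) (t : 𝒳) :
    ESG ν g n (update x i t) = ESG ν g n x := by
  simp only [ESG]
  congr 1
  funext y
  rw [sel_update hn]

lemma ESP_update (i : Fin m) (x : Fin m → 𝒳) (t : 𝒳) :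
    ESP ν g i (update x i t) = ESP ν g i x := by
  simp only [ESP]
  congr 1
  funext y
  rw [sel_ne_update]

section Main
include hg hgL2

lemma fubini_mul_sel (p : Fin m → Prop) [DecidablePred p] {φ : (Fin m → 𝒳) → ℝ}
    (hφm : StronglyMeasurable φ) (hφ2 : MemLp φ 2 (Measure.pi ν)) :
    ∫ z, φ z.1 * g (sel p z) ∂((Measure.pi ν).prod (Measure.pi ν)) =
      ∫ x, φ x * ∫ y, g (sel p (x, y)) ∂(Measure.pi ν) ∂(Measure.pi ν) := by
  have hint : Integrable (fun z => φ z.1 * g (sel p z))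
      ((Measure.pi ν).prod (Measure.pi ν)) :=
    integrable_mul_of_memL2 (hφ2.comp_measurePreserving measurePreserving_fst')
      (memL2_sel ν hg hgL2 p)
  rw [integral_prod _ hint]
  congr 1
  funext x
  calc ∫ y, φ (x, y).1 * g (sel p (x, y)) ∂(Measure.pi ν)
      = ∫ y, φ x * g (sel p (x, y)) ∂(Measure.pi ν) := rfl
    _ = φ x * ∫ y, g (sel p (x, y)) ∂(Measure.pi ν) := integral_const_mul _ _

lemma ES_cross (i : Fin m) {φ : (Fin m → 𝒳) → ℝ}
    (hφm : StronglyMeasurable φ) (hφ2 : MemLp φ 2 (Measure.pi ν))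
    (hinv : ∀ x t, φ (update x i t) = φ x) :
    ∫ x, φ x * ESG ν g ((i : ℕ) + 1) x ∂(Measure.pi ν) =
      ∫ x, φ x * ESG ν g (i : ℕ) x ∂(Measure.pi ν) := by
  have h1 := fubini_mul_sel ν hg hgL2 (fun j => (j : ℕ) < (i : ℕ) + 1) hφm hφ2
  have h2 := fubini_mul_sel ν hg hgL2 (fun j => (j : ℕ) < (i : ℕ)) hφm hφ2
  have hmid := (measurePreserving_selPair ν (fun j => j ≠ i)).integral_comp''
    (h := fun z => φ z.1 * g (sel (fun j => (j : ℕ) < (i : ℕ) + 1) z))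
    (((hφm.measurable.comp measurable_fst).mul
      (hg.comp (measurable_sel _))).aestronglyMeasurable)
  have hmid' : ∫ z, φ z.1 * g (sel (fun j => (j : ℕ) < (i : ℕ)) z)
        ∂((Measure.pi ν).prod (Measure.pi ν)) =
      ∫ z, φ z.1 * g (sel (fun j => (j : ℕ) < (i : ℕ) + 1) z)
        ∂((Measure.pi ν).prod (Measure.pi ν)) := by
    rw [← hmid]
    congr 1
    funext z
    show _ = φ (sel (fun j => j ≠ i) z) * g (sel (fun j => (j : ℕ) < (i : ℕ) + 1)
      (sel (fun j => j ≠ i) z, sel (fun j => ¬j ≠ i) z))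
    rw [sel_succ_pair, sel_ne, hinv]
  exact h1.symm.trans (hmid'.symm.trans h2)

lemma ES_half (i : Fin m) :
    ∫ x, (g x - ESP ν g i x)^2 ∂(Measure.pi ν) =
      (1/2) * ∫ z, (g z.1 - g (update z.1 i (z.2 i)))^2
        ∂((Measure.pi ν).prod (Measure.pi ν)) := by
  set π := Measure.pi ν with hπ
  set P := ESP ν g i with hP
  have hP2 : MemLp P 2 π := memL2_ESP ν hg hgL2 i
  have hPm : Measurable P := (sm_ESP ν hg hgL2 i).measurable
  have hgg : Integrable (fun x => (g x)^2) π := hgL2.integrable_sq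
  have hPP : Integrable (fun x => P x * P x) π := by
    have := hP2.integrable_sq
    simpa [sq] using this
  have hgP : Integrable (fun x => g x * P x) π := integrable_mul_of_memL2 hgL2 hP2
  -- B = C
  have h1 := (measurePreserving_sel ν (fun j => j ≠ i)).integral_comp''
    (h := fun x => g x * P x) ((hg.mul hPm).aestronglyMeasurable)
  have h2 : ∀ z : (Fin m → 𝒳) × (Fin m → 𝒳), P (sel (fun j => j ≠ i) z) = P z.1 := by
    intro z
    rw [sel_ne]
    exact ESP_update ν i z.1 (z.2 i)
  have h3 : ∫ z, g (sel (fun j => j ≠ i) z) * P z.1 ∂(π.prod π) = ∫ x, P x * P x ∂π := by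
    have hint : Integrable (fun z => g (sel (fun j => j ≠ i) z) * P z.1) (π.prod π) := by
      have := integrable_mul_of_memL2 (hP2.comp_measurePreserving measurePreserving_fst')
        (memL2_sel ν hg hgL2 (fun j => j ≠ i))
      simpa [mul_comm] using this
    rw [integral_prod _ hint]
    congr 1
    funext x
    calc ∫ y, g (sel (fun j => j ≠ i) (x, y)) * P x ∂π
        = (∫ y, g (sel (fun j => j ≠ i) (x, y)) ∂π) * P x := integral_mul_const _ _
      _ = P x * P x := mul_comm _ _
  have h1' : ∫ z, g (sel (fun j => j ≠ i) z) * P (sel (fun j => j ≠ i) z) ∂(π.prod π)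
      = ∫ x, g x * P x ∂π := h1
  have hBC : ∫ x, g x * P x ∂π = ∫ x, P x * P x ∂π := by
    rw [← h1', ← h3]
    congr 1
    funext z
    rw [h2]
  -- expansions
  have hf2 : Integrable (fun z : (Fin m → 𝒳) × (Fin m → 𝒳) => (g z.1)^2) (π.prod π) :=
    (hgL2.comp_measurePreserving measurePreserving_fst').integrable_sq
  have hs2 : Integrable (fun z : (Fin m → 𝒳) × (Fin m → 𝒳) =>
      (g (sel (fun j => j ≠ i) z))^2) (π.prod π) :=
    (memL2_sel ν hg hgL2 (fun j => j ≠ i)).integrable_sq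
  have hfs : Integrable (fun z : (Fin m → 𝒳) × (Fin m → 𝒳) =>
      g z.1 * g (sel (fun j => j ≠ i) z)) (π.prod π) :=
    integrable_mul_of_memL2 (hgL2.comp_measurePreserving measurePreserving_fst')
      (memL2_sel ν hg hgL2 (fun j => j ≠ i))
  have ef : ∫ z : (Fin m → 𝒳) × (Fin m → 𝒳), (g z.1)^2 ∂(π.prod π) = ∫ x, (g x)^2 ∂π :=
    measurePreserving_fst'.integral_comp'' ((hg.pow_const 2).aestronglyMeasurable)
  have es : ∫ z : (Fin m → 𝒳) × (Fin m → 𝒳), (g (sel (fun j => j ≠ i) z))^2 ∂(π.prod π)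
      = ∫ x, (g x)^2 ∂π :=
    (measurePreserving_sel ν (fun j => j ≠ i)).integral_comp''
      ((hg.pow_const 2).aestronglyMeasurable)
  have efs : ∫ z : (Fin m → 𝒳) × (Fin m → 𝒳), g z.1 * g (sel (fun j => j ≠ i) z) ∂(π.prod π)
      = ∫ x, g x * P x ∂π := by
    rw [integral_prod _ hfs]
    congr 1
    funext x
    calc ∫ y, g (x, y).1 * g (sel (fun j => j ≠ i) (x, y)) ∂π
        = ∫ y, g x * g (sel (fun j => j ≠ i) (x, y)) ∂π := rfl
      _ = g x * ∫ y, g (sel (fun j => j ≠ i) (x, y)) ∂π := integral_const_mul _ _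
      _ = g x * P x := rfl
  -- LHS expansion
  have lhs_exp : ∫ x, (g x - P x)^2 ∂π
      = ∫ x, (g x)^2 ∂π - 2 * ∫ x, g x * P x ∂π + ∫ x, P x * P x ∂π := by
    have hpt : ∀ x, (g x - P x)^2 = (g x)^2 - 2 * (g x * P x) + P x * P x := fun x => by ring
    simp_rw [hpt]
    have hA : Integrable (fun x => g x ^ 2 - 2 * (g x * P x)) π := hgg.sub (hgP.const_mul 2)
    rw [integral_add hA hPP, integral_sub hgg (hgP.const_mul 2), integral_const_mul]
  -- RHS expansion
  have rhs_exp : ∫ z, (g z.1 - g (update z.1 i (z.2 i)))^2 ∂(π.prod π)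
      = ∫ x, (g x)^2 ∂π - 2 * ∫ x, g x * P x ∂π + ∫ x, (g x)^2 ∂π := by
    have hpt : ∀ z : (Fin m → 𝒳) × (Fin m → 𝒳),
        (g z.1 - g (update z.1 i (z.2 i)))^2
          = (g z.1)^2 - 2 * (g z.1 * g (sel (fun j => j ≠ i) z))
            + (g (sel (fun j => j ≠ i) z))^2 := by
      intro z
      rw [sel_ne]
      ring
    simp_rw [hpt]
    have hA : Integrable (fun z : (Fin m → 𝒳) × (Fin m → 𝒳) =>
        g z.1 ^ 2 - 2 * (g z.1 * g (sel (fun j => j ≠ i) z))) (π.prod π) :=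
      hf2.sub (hfs.const_mul 2)
    rw [integral_add hA hs2, integral_sub hf2 (hfs.const_mul 2), integral_const_mul, ef, efs, es]
  rw [lhs_exp, rhs_exp, hBC]
  ring

lemma ES_step (i : Fin m) :
    ∫ x, (ESG ν g ((i : ℕ) + 1) x - ESG ν g (i : ℕ) x)^2 ∂(Measure.pi ν) ≤
      (1/2) * ∫ z, (g z.1 - g (update z.1 i (z.2 i)))^2
        ∂((Measure.pi ν).prod (Measure.pi ν)) := by
  set π := Measure.pi ν with hπ
  set ψ := fun z : (Fin m → 𝒳) × (Fin m → 𝒳) =>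
    g (sel (fun j => (j : ℕ) < (i : ℕ) + 1) z)
      - ESP ν g i (sel (fun j => (j : ℕ) < (i : ℕ) + 1) z) with hψdef
  have hψ2 : MemLp ψ 2 (π.prod π) :=
    (memL2_sel ν hg hgL2 _).sub
      ((memL2_ESP ν hg hgL2 i).comp_measurePreserving (measurePreserving_sel ν _))
  have hψm : Measurable ψ :=
    (hg.comp (measurable_sel _)).sub
      ((sm_ESP ν hg hgL2 i).measurable.comp (measurable_sel _))
  -- the auxiliary function on π.prod (π.prod π)
  set H := fun xw : (Fin m → 𝒳) × ((Fin m → 𝒳) × (Fin m → 𝒳)) =>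
    g (sel (fun j => (j : ℕ) < (i : ℕ)) (xw.1, sel (fun j => j ≠ i) xw.2)) with hHdef
  have hMP : MeasurePreserving (fun xw : (Fin m → 𝒳) × ((Fin m → 𝒳) × (Fin m → 𝒳)) =>
      (xw.1, sel (fun j => j ≠ i) xw.2)) (π.prod (π.prod π)) (π.prod π) :=
    (MeasurePreserving.id π).prod (measurePreserving_sel ν _)
  have hH1 : Integrable H (π.prod (π.prod π)) :=
    (((memL2_sel ν hg hgL2 (fun j => (j : ℕ) < (i : ℕ))).comp_measurePreserving
      hMP)).integrable one_le_two
  -- a.e. pointwise representation and bound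
  have key : ∀ᵐ x ∂π, (ESG ν g ((i : ℕ) + 1) x - ESG ν g (i : ℕ) x)^2
      ≤ ∫ y, (ψ (x, y))^2 ∂π := by
    filter_upwards [hH1.prod_right_ae,
      ((memL2_sel ν hg hgL2 (fun j => (j : ℕ) < (i : ℕ) + 1)).integrable
        one_le_two).prod_right_ae,
      hψ2.integrable_sq.prod_right_ae] with x hxH hxg hxψ
    have e2 : ∀ y, ESP ν g i (sel (fun j => (j : ℕ) < (i : ℕ) + 1) (x, y))
        = ∫ y', H (x, (y, y')) ∂π := by
      intro y
      show (∫ y', g (sel (fun j => j ≠ i)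
        (sel (fun j => (j : ℕ) < (i : ℕ) + 1) (x, y), y')) ∂π) = _
      congr 1
      funext y'
      rw [sel_ne]
      show g (update (sel (fun j => (j : ℕ) < (i : ℕ) + 1) (x, y)) i (y' i)) = _
      rw [update_sel]
    have e3 : Integrable (fun y => ∫ y', H (x, (y, y')) ∂π) π := hxH.integral_prod_left
    have e3' : Integrable (fun y =>
        ESP ν g i (sel (fun j => (j : ℕ) < (i : ℕ) + 1) (x, y))) π :=
      e3.congr (Filter.Eventually.of_forall fun y => (e2 y).symm)
    have e4 : ∫ y, ESP ν g i (sel (fun j => (j : ℕ) < (i : ℕ) + 1) (x, y)) ∂π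
        = ESG ν g (i : ℕ) x := by
      calc ∫ y, ESP ν g i (sel (fun j => (j : ℕ) < (i : ℕ) + 1) (x, y)) ∂π
          = ∫ y, ∫ y', H (x, (y, y')) ∂π ∂π := by simp_rw [e2]
        _ = ∫ w, H (x, w) ∂(π.prod π) := by
            exact integral_integral (f := fun y y' => H (x, (y, y'))) hxH
        _ = ∫ y, g (sel (fun j => (j : ℕ) < (i : ℕ)) (x, y)) ∂π :=
            (measurePreserving_sel ν (fun j => j ≠ i)).integral_comp''
              ((hg.comp ((measurable_sel _).comp
                (measurable_prodMk_left.comp measurable_id))).aestronglyMeasurable)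
        _ = ESG ν g (i : ℕ) x := rfl
    have e6 : ESG ν g ((i : ℕ) + 1) x - ESG ν g (i : ℕ) x = ∫ y, ψ (x, y) ∂π := by
      rw [← e4]
      exact (integral_sub hxg e3').symm
    have hslice : MemLp (fun y => ψ (x, y)) 2 π :=
      (memLp_two_iff_integrable_sq
        ((hψm.comp measurable_prodMk_left).aestronglyMeasurable)).2 hxψ
    rw [e6]
    exact sq_integral_le' hslice
  have hDint : Integrable (fun x => (ESG ν g ((i : ℕ) + 1) x - ESG ν g (i : ℕ) x)^2) π :=
    ((memL2_ESG ν hg hgL2 ((i : ℕ) + 1)).sub (memL2_ESG ν hg hgL2 (i : ℕ))).integrable_sq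
  calc ∫ x, (ESG ν g ((i : ℕ) + 1) x - ESG ν g (i : ℕ) x)^2 ∂π
      ≤ ∫ x, ∫ y, (ψ (x, y))^2 ∂π ∂π :=
        integral_mono_ae hDint hψ2.integrable_sq.integral_prod_left key
    _ = ∫ z, (ψ z)^2 ∂(π.prod π) := (integral_prod _ hψ2.integrable_sq).symm
    _ = ∫ x, (g x - ESP ν g i x)^2 ∂π :=
        (measurePreserving_sel ν (fun j => (j : ℕ) < (i : ℕ) + 1)).integral_comp''
          (((hg.sub (sm_ESP ν hg hgL2 i).measurable).pow_const 2).aestronglyMeasurable)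
    _ = (1/2) * ∫ z, (g z.1 - g (update z.1 i (z.2 i)))^2 ∂(π.prod π) :=
        ES_half ν hg hgL2 i

end Main
end ES

/-- Efron–Stein inequality: for independent random variables `X = (X₁,…,X_m)` (modeled
on a product probability space, with an independent copy `X'` on a second factor),
`Var(g(X)) ≤ (1/2) ∑ᵢ E[(g(X) − g(X⁽ⁱ⁾))²]`, where `X⁽ⁱ⁾` replaces `Xᵢ` by `X'ᵢ`. -/
theorem stmt_8 {𝒳 : Type*} [MeasurableSpace 𝒳] {m : ℕ}
    (ν : Fin m → Measure 𝒳) [∀ i, IsProbabilityMeasure (ν i)]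
    (g : (Fin m → 𝒳) → ℝ) (hg : Measurable g)
    (hg2 : MemLp (fun ω : (Fin m → 𝒳) × (Fin m → 𝒳) => g ω.1) 2
      ((Measure.pi ν).prod (Measure.pi ν))) :
    variance (fun ω : (Fin m → 𝒳) × (Fin m → 𝒳) => g ω.1)
        ((Measure.pi ν).prod (Measure.pi ν))
      ≤ (1 / 2) * ∑ i, ∫ ω, (g ω.1 - g (Function.update ω.1 i (ω.2 i))) ^ 2
          ∂((Measure.pi ν).prod (Measure.pi ν)) := by
  classical
  set π : Measure (Fin m → 𝒳) := Measure.pi ν with hπdef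
  set μ2 : Measure ((Fin m → 𝒳) × (Fin m → 𝒳)) := π.prod π with hμ2def
  have hfst : MeasurePreserving (Prod.fst : (Fin m → 𝒳) × (Fin m → 𝒳) → (Fin m → 𝒳)) μ2 π :=
    measurePreserving_fst'
  have hgL2 : MemLp g 2 π := by
    have h := (memLp_map_measure_iff (hfst.map_eq.symm ▸ hg.aestronglyMeasurable)
      measurable_fst.aemeasurable).2 hg2
    rwa [hfst.map_eq] at h
  set c : ℝ := ∫ x, g x ∂π with hc
  -- variance as an integral over π
  have h1 := variance_eq_integral hg2.aestronglyMeasurable.aemeasurable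
  simp only [Pi.pow_apply, Pi.sub_apply] at h1
  have h2 : ∫ w : (Fin m → 𝒳) × (Fin m → 𝒳), g w.1 ∂μ2 = c :=
    hfst.integral_comp'' hg.aestronglyMeasurable
  have h3 : ∫ z, (g z.1 - c)^2 ∂μ2 = ∫ x, (g x - c)^2 ∂π :=
    hfst.integral_comp'' (((hg.sub measurable_const).pow_const 2).aestronglyMeasurable)
  have hvar : variance (fun ω : (Fin m → 𝒳) × (Fin m → 𝒳) => g ω.1) μ2
      = ∫ x, (g x - c)^2 ∂π := by
    rw [h1, h2]
    exact h3
  -- martingale differences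
  set D : ℕ → (Fin m → 𝒳) → ℝ := fun k x => ESG ν g (k + 1) x - ESG ν g k x with hDdef
  have hD2 : ∀ k, MemLp (D k) 2 π := fun k =>
    (memL2_ESG ν hg hgL2 (k + 1)).sub (memL2_ESG ν hg hgL2 k)
  have hDm : ∀ k, StronglyMeasurable (D k) := fun k =>
    (sm_ESG ν hg hgL2 (k + 1)).sub (sm_ESG ν hg hgL2 k)
  have hDint : ∀ k l, Integrable (fun x => D k x * D l x) π := fun k l =>
    integrable_mul_of_memL2 (hD2 k) (hD2 l)
  have htel : ∀ x, g x - c = ∑ k ∈ Finset.range m, D k x := by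
    intro x
    rw [Finset.sum_range_sub (f := fun k => ESG ν g k x)]
    rw [ESG_top, ESG_zero]
  -- cross terms vanish
  have hcross' : ∀ k l, k < l → l < m → ∫ x, D k x * D l x ∂π = 0 := by
    intro k l hkl hlm
    have hinv : ∀ x t, D k (update x (⟨l, hlm⟩ : Fin m) t) = D k x := by
      intro x t
      show ESG ν g (k + 1) _ - ESG ν g k _ = _
      rw [ESG_update (ν := ν) (i := ⟨l, hlm⟩) (by exact hkl),
        ESG_update (ν := ν) (i := ⟨l, hlm⟩) (by exact Nat.le_of_lt hkl)]
    have hcr := ES_cross ν hg hgL2 (⟨l, hlm⟩ : Fin m) (hDm k) (hD2 k) hinv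
    have hsplit : ∫ x, D k x * D l x ∂π
        = (∫ x, D k x * ESG ν g (l + 1) x ∂π) - ∫ x, D k x * ESG ν g l x ∂π := by
      rw [← integral_sub
        (integrable_mul_of_memL2 (hD2 k) (memL2_ESG ν hg hgL2 (l + 1)))
        (integrable_mul_of_memL2 (hD2 k) (memL2_ESG ν hg hgL2 l))]
      congr 1
      funext x
      show D k x * (ESG ν g (l + 1) x - ESG ν g l x) = _
      ring
    rw [hsplit]
    rw [show (∫ x, D k x * ESG ν g (l + 1) x ∂π) = ∫ x, D k x * ESG ν g l x ∂π from hcr]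
    exact sub_self _
  have hcross : ∀ k ∈ Finset.range m, ∀ l ∈ Finset.range m, l ≠ k →
      ∫ x, D k x * D l x ∂π = 0 := by
    intro k hk l hl hne
    rcases lt_or_gt_of_ne hne with h | h
    · have := hcross' l k h (Finset.mem_range.1 hk)
      rw [← this]
      simp_rw [mul_comm]
    · exact hcross' k l h (Finset.mem_range.1 hl)
  -- expansion of the square
  have hexp : ∫ x, (g x - c)^2 ∂π = ∑ k ∈ Finset.range m, ∫ x, D k x * D k x ∂π := by
    have hsq : ∀ x, (g x - c)^2
        = ∑ k ∈ Finset.range m, ∑ l ∈ Finset.range m, D k x * D l x := by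
      intro x
      rw [sq, htel x, Finset.sum_mul_sum]
    simp_rw [hsq]
    rw [integral_finset_sum _ (fun k _ => integrable_finset_sum _ (fun l _ => hDint k l))]
    refine Finset.sum_congr rfl (fun k hk => ?_)
    rw [integral_finset_sum _ (fun l _ => hDint k l)]
    exact Finset.sum_eq_single_of_mem k hk (fun l hl hne => hcross k hk l hl hne)
  -- the per-coordinate bound, as a function on ℕ
  set T : ℕ → ℝ := fun k =>
    if h : k < m then
      (1/2) * ∫ z, (g z.1 - g (update z.1 (⟨k, h⟩ : Fin m) (z.2 (⟨k, h⟩ : Fin m))))^2 ∂μ2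
    else 0 with hT
  have hbound : ∀ k ∈ Finset.range m, ∫ x, D k x * D k x ∂π ≤ T k := by
    intro k hk
    have hkm := Finset.mem_range.1 hk
    have hstep := ES_step ν hg hgL2 (⟨k, hkm⟩ : Fin m)
    have heq : ∫ x, D k x * D k x ∂π
        = ∫ x, (ESG ν g ((⟨k, hkm⟩ : Fin m) + 1 : ℕ) x - ESG ν g ((⟨k, hkm⟩ : Fin m) : ℕ) x)^2 ∂π := by
      congr 1
      funext x
      rw [pow_two]
    simp only [hT]
    rw [dif_pos hkm]
    rw [heq]
    exact hstep
  have hTsum : ∑ i : Fin m, ∫ ω, (g ω.1 - g (update ω.1 i (ω.2 i)))^2 ∂μ2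
      = ∑ k ∈ Finset.range m, (2 : ℝ) * T k := by
    rw [← Fin.sum_univ_eq_sum_range (fun k => (2 : ℝ) * T k) m]
    refine Finset.sum_congr rfl (fun i _ => ?_)
    simp only [hT]
    rw [dif_pos i.isLt]
    simp only [Fin.eta]
    ring
  calc variance (fun ω : (Fin m → 𝒳) × (Fin m → 𝒳) => g ω.1) μ2
      = ∫ x, (g x - c)^2 ∂π := hvar
    _ = ∑ k ∈ Finset.range m, ∫ x, D k x * D k x ∂π := hexp
    _ ≤ ∑ k ∈ Finset.range m, T k := Finset.sum_le_sum hbound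
    _ = (1/2) * ∑ k ∈ Finset.range m, (2 : ℝ) * T k := by
        rw [Finset.mul_sum]
        refine Finset.sum_congr rfl (fun k _ => ?_)
        ring
    _ = (1/2) * ∑ i : Fin m, ∫ ω, (g ω.1 - g (update ω.1 i (ω.2 i)))^2 ∂μ2 := by
        rw [hTsum]
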